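/- For every prime power q = p^r there exists an invertible Φ(q)×Φ(q) matrix M over the finite field F_q, where Φ(q) = p^r − p^{r−1} is the Euler totient of q, such that every 2×2 submatrix of M (obtained by selecting any two rows and any two columns) is invertible; that is, a linear (2,Φ(q),q)-AONT exists for all prime powers q. -/

import Mathlib

open Finset

/-- `C(p-1, j) ≡ (-1)^j mod p`. -/
lemma AONT_choose_pm1 {p : ℕ} (hp : p.Prime) :
    ∀ j, j ≤ p - 1 → ((Nat.choose (p - 1) j : ZMod p) = (-1) ^ j) := by
  intro j hj
  induction j with
  | zero => simp
  | succ j ih =>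
    have hj' : j ≤ p - 1 := le_trans (Nat.le_succ j) hj
    have hpas : Nat.choose p (j + 1) = Nat.choose (p - 1) j + Nat.choose (p - 1) (j + 1) := by
      conv_lhs => rw [← Nat.succ_pred_eq_of_pos hp.pos]
      exact Nat.choose_succ_succ _ _
    have hdvd : p ∣ Nat.choose p (j + 1) :=
      hp.dvd_choose_self (Nat.succ_ne_zero j) (by omega)
    have h0 : ((Nat.choose p (j+1) : ℕ) : ZMod p) = 0 :=
      (ZMod.natCast_eq_zero_iff _ _).mpr hdvd
    rw [hpas] at h0
    push_cast at h0
    rw [ih hj'] at h0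
    have : ((Nat.choose (p - 1) (j + 1) : ℕ) : ZMod p) = -(-1)^j := by linear_combination h0
    rw [this, pow_succ]
    ring

/-- `C(p-2, k) = (-1)^k (k+1) mod p`, hence nonzero. -/
lemma AONT_choose_pm2 {p : ℕ} (hp : p.Prime) :
    ∀ k, k ≤ p - 2 → ((Nat.choose (p - 2) k : ZMod p) = (-1) ^ k * ((k : ZMod p) + 1)) := by
  intro k hk
  induction k with
  | zero => simp
  | succ k ih =>
    have hk' : k ≤ p - 2 := le_trans (Nat.le_succ k) hk
    have hp2 : 2 ≤ p := hp.two_le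
    have hpas : Nat.choose (p - 1) (k + 1) = Nat.choose (p - 2) k + Nat.choose (p - 2) (k + 1) := by
      have : p - 1 = (p - 2) + 1 := by omega
      rw [this]
      exact Nat.choose_succ_succ _ _
    have h1 : ((Nat.choose (p - 1) (k + 1) : ℕ) : ZMod p) = (-1) ^ (k + 1) :=
      AONT_choose_pm1 hp (k + 1) (by omega)
    rw [hpas] at h1
    push_cast at h1
    rw [ih hk'] at h1
    have : ((Nat.choose (p - 2) (k+1) : ℕ) : ZMod p)
        = (-1)^(k+1) - (-1)^k * ((k : ZMod p) + 1) := by linear_combination h1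
    rw [this, pow_succ]
    push_cast
    ring

lemma AONT_choose_pm2_ne_zero {p : ℕ} (hp : p.Prime) {k : ℕ} (hk : k ≤ p - 2) :
    ((Nat.choose (p - 2) k : ZMod p) ≠ 0) := by
  haveI := Fact.mk hp
  rw [AONT_choose_pm2 hp k hk]
  apply mul_ne_zero (pow_ne_zero _ (neg_ne_zero.mpr one_ne_zero))
  have h2 : ((k + 1 : ℕ) : ZMod p) ≠ 0 := by
    rw [Ne, ZMod.natCast_eq_zero_iff]
    intro hdvd
    have hle := Nat.le_of_dvd (Nat.succ_pos k) hdvd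
    have := hp.two_le
    omega
  intro hzero
  apply h2
  push_cast
  linear_combination hzero

/-- main binomial nonvanishing: all binomial coefficients of `(p-1)*p^t - 1` are
nonzero mod `p`. -/
lemma AONT_choose_ne_zero {p : ℕ} (hp : p.Prime) :
    ∀ t k, k ≤ (p - 1) * p ^ t - 1 → ((Nat.choose ((p - 1) * p ^ t - 1) k : ZMod p) ≠ 0) := by
  haveI := Fact.mk hp
  have hp2 : 2 ≤ p := hp.two_le
  intro t
  induction t with
  | zero =>
    intro k hk
    simp only [pow_zero, mul_one] at *
    have h : (p - 1) - 1 = p - 2 := by omega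
    rw [h] at *
    exact AONT_choose_pm2_ne_zero hp hk
  | succ t ih =>
    intro k hk
    set A := (p - 1) * p ^ t with hA
    have hA1 : 1 ≤ A := Nat.mul_pos (by omega) (Nat.pow_pos (by omega))
    have hPA : p * A = (p - 1) * p ^ (t + 1) := by rw [hA, pow_succ]; ring
    have hpA : p ≤ p * A := Nat.le_mul_of_pos_right _ hA1
    have hN : (p - 1) * p ^ (t + 1) - 1 = p * (A - 1) + (p - 1) := by
      have h1 : p * (A - 1) = p * A - p := Nat.mul_sub_one p A
      omega
    rw [hN]
    set N := p * (A - 1) + (p - 1) with hNdef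
    have hmod : N % p = p - 1 := by
      rw [hNdef, Nat.mul_add_mod]
      exact Nat.mod_eq_of_lt (by omega)
    have hdiv : N / p = A - 1 := by
      rw [hNdef, Nat.mul_add_div (by omega)]
      rw [Nat.div_eq_of_lt (by omega)]
      omega
    have lucas := Choose.choose_modEq_choose_mod_mul_choose_div (p := p) (n := N) (k := k)
    have heq : ((Nat.choose N k : ℤ) : ZMod p)
        = ((Nat.choose (N % p) (k % p) * Nat.choose (N / p) (k / p) : ℤ) : ZMod p) :=
      (ZMod.intCast_eq_intCast_iff _ _ _).mpr lucas
    push_cast at heq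
    rw [heq, hmod, hdiv]
    apply mul_ne_zero
    · have h1 : ((Nat.choose (p-1) (k % p) : ZMod p)) = (-1) ^ (k % p) :=
        AONT_choose_pm1 hp _ (by have := Nat.mod_lt k (show 0 < p by omega); omega)
      rw [h1]
      exact pow_ne_zero _ (neg_ne_zero.mpr one_ne_zero)
    · have hk' : k / p ≤ A - 1 := by
        have : k / p ≤ N / p := Nat.div_le_div_right (by omega)
        rwa [hdiv] at this
      have : A - 1 = (p - 1) * p ^ t - 1 := by rw [hA]
      rw [this] at hk' ⊢
      exact ih _ hk'

lemma AONT_coprime {p m : ℕ} (hp2 : 2 ≤ p) (hm1 : 1 ≤ m) :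
    Nat.Coprime ((p - 1) * m - 1) (p * m - 1) := by
  have hA1 : 1 ≤ (p - 1) * m := Nat.mul_pos (by omega) hm1
  have key : p * ((p - 1) * m - 1) + 1 = (p - 1) * (p * m - 1) := by
    have h1 : p * ((p - 1) * m - 1) = p * ((p - 1) * m) - p := Nat.mul_sub_one _ _
    have h2 : (p - 1) * (p * m - 1) = (p - 1) * (p * m) - (p - 1) := Nat.mul_sub_one _ _
    have h3 : p * ((p - 1) * m) = (p - 1) * (p * m) := by ring
    have h4 : p ≤ p * ((p - 1) * m) := Nat.le_mul_of_pos_right _ hA1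
    omega
  have hg : Nat.gcd ((p - 1) * m - 1) (p * m - 1) ∣ 1 := by
    have d1 : Nat.gcd ((p - 1) * m - 1) (p * m - 1) ∣ p * ((p - 1) * m - 1) :=
      Dvd.dvd.mul_left (Nat.gcd_dvd_left _ _) p
    have d2 : Nat.gcd ((p - 1) * m - 1) (p * m - 1) ∣ (p - 1) * (p * m - 1) :=
      Dvd.dvd.mul_left (Nat.gcd_dvd_right _ _) (p - 1)
    rw [← key] at d2
    have := Nat.dvd_sub d2 d1
    simpa using this
  exact Nat.dvd_one.mp hg

lemma AONT_2x2 {F : Type*} [Field F] [Fintype F] (n : ℕ) (hn1 : 1 ≤ n)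
    (hcop : Nat.Coprime n (Fintype.card F - 1)) {a b c d : F}
    (hab : a ≠ b) (hac : a ≠ c) (hbd : b ≠ d) (hcd : c ≠ d)
    (hadbc : a * d ≠ b * c) : a ^ n * d ^ n ≠ b ^ n * c ^ n := by
  intro h
  rw [← mul_pow, ← mul_pow] at h
  by_cases ha : a = 0
  · have hb : b ≠ 0 := fun h0 => hab (by rw [ha, h0])
    have hc : c ≠ 0 := fun h0 => hac (by rw [ha, h0])
    rw [ha, zero_mul, zero_pow (by omega)] at h
    exact pow_ne_zero n (mul_ne_zero hb hc) h.symm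
  by_cases hd : d = 0
  · have hb : b ≠ 0 := fun h0 => hbd (by rw [hd, h0])
    have hc : c ≠ 0 := fun h0 => hcd (by rw [hd, h0])
    rw [hd, mul_zero, zero_pow (by omega)] at h
    exact pow_ne_zero n (mul_ne_zero hb hc) h.symm
  by_cases hb : b = 0
  · rw [hb, zero_mul, zero_pow (by omega)] at h
    exact pow_ne_zero n (mul_ne_zero ha hd) h
  by_cases hc : c = 0
  · rw [hc, mul_zero, zero_pow (by omega)] at h
    exact pow_ne_zero n (mul_ne_zero ha hd) h
  -- all nonzero
  have hbc : b * c ≠ 0 := mul_ne_zero hb hc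
  set u : F := (a * d) / (b * c) with hu
  have hun : u ^ n = 1 := by
    rw [hu, div_pow, h, div_self (pow_ne_zero n hbc)]
  have hu0 : u ≠ 0 := div_ne_zero (mul_ne_zero ha hd) hbc
  have huq : u ^ (Fintype.card F - 1) = 1 := FiniteField.pow_card_sub_one_eq_one u hu0
  have h1 : orderOf u ∣ n := orderOf_dvd_of_pow_eq_one hun
  have h2 : orderOf u ∣ Fintype.card F - 1 := orderOf_dvd_of_pow_eq_one huq
  have h3 : orderOf u ∣ 1 := hcop ▸ Nat.dvd_gcd h1 h2
  have hu1 : u = 1 := orderOf_eq_one_iff.mp (Nat.dvd_one.mp h3)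
  exact hadbc (by rwa [hu, div_eq_one_iff_eq hbc] at hu1)

/-- For every prime power q = p^r there is a linear (2,Φ(q),q)-AONT: an invertible
Φ(q)×Φ(q) matrix over F_q, Φ(q) = p^r − p^{r−1}, all of whose 2×2 submatrices are
invertible. -/
theorem exists_linear_2_totient_q_AONT
    (p r : ℕ) (hp : p.Prime) (hr : 0 < r)
    (F : Type*) [Field F] [Fintype F] (hF : Fintype.card F = p ^ r) :
    ∃ M : Matrix (Fin (p ^ r - p ^ (r - 1))) (Fin (p ^ r - p ^ (r - 1))) F,
      M.det ≠ 0 ∧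
      ∀ i j k l : Fin (p ^ r - p ^ (r - 1)), i ≠ j → k ≠ l →
        Matrix.det !![M i k, M i l; M j k, M j l] ≠ 0 := by
  classical
  haveI := Fact.mk hp
  have hp2 : 2 ≤ p := hp.two_le
  have hm1 : 1 ≤ p ^ (r - 1) := Nat.one_le_pow _ _ (by omega)
  have hq : p ^ r = p * p ^ (r - 1) := by
    conv_lhs => rw [show r = (r - 1) + 1 by omega]
    rw [pow_succ]; ring
  set m := p ^ (r - 1) with hm
  set s := p ^ r - p ^ (r - 1) with hsdef
  have hs_eq : s = (p - 1) * m := by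
    have h1 : (p - 1) * m = p * m - 1 * m := Nat.sub_mul p 1 m
    rw [hsdef, hq]
    omega
  have hs1 : 1 ≤ s := by
    rw [hs_eq]; exact Nat.mul_pos (by omega) hm1
  set n := s - 1 with hn
  have hsn : s = n + 1 := by omega
  -- characteristic
  haveI hchar : CharP F p := by
    haveI hc : CharP F (ringChar F) := ringChar.charP F
    have hprime : (ringChar F).Prime := CharP.char_is_prime F (ringChar F)
    obtain ⟨nn, -, hcard⟩ := FiniteField.card F (ringChar F)
    have hdvd : ringChar F ∣ p ^ r := by
      rw [← hF, hcard]
      exact dvd_pow_self _ nn.pos.ne'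
    have : ringChar F = p :=
      (Nat.prime_dvd_prime_iff_eq hprime hp).mp (hprime.dvd_of_dvd_pow hdvd)
    rwa [this] at hc
  -- embedding of indices into F
  obtain ⟨e⟩ : Nonempty (Fin s ↪ F) :=
    Function.Embedding.nonempty_of_card_le (by rw [Fintype.card_fin, hF]; exact Nat.sub_le _ _)
  -- binomial coefficients are nonzero in F
  have hchoose : ∀ k : ℕ, k ≤ n → (Nat.choose n k : F) ≠ 0 := by
    intro k hk
    have hn_eq : n = (p - 1) * p ^ (r - 1) - 1 := by rw [hn, hs_eq, hm]
    have h1 : ((Nat.choose n k : ℕ) : ZMod p) ≠ 0 := by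
      rw [hn_eq] at hk ⊢
      exact AONT_choose_ne_zero hp (r - 1) k hk
    rw [Ne, ZMod.natCast_eq_zero_iff] at h1
    exact fun h => h1 ((CharP.cast_eq_zero_iff F p _).mp h)
  -- the matrices
  set V := Matrix.vandermonde (fun i : Fin s => e i) with hV
  set D := Matrix.diagonal (fun k : Fin s => (Nat.choose n (k : ℕ) : F)) with hD
  set W := V.submatrix id (Fin.revPerm : Equiv.Perm (Fin s)) with hW
  have hM : V * D * W.transpose = Matrix.of (fun i j : Fin s => (e i + e j) ^ n) := by
    ext i j
    have lhs : (V * D * W.transpose) i j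
        = ∑ k : Fin s, e i ^ (k : ℕ) * e j ^ (n - (k : ℕ)) * (Nat.choose n (k : ℕ) : F) := by
      rw [Matrix.mul_apply]
      refine Finset.sum_congr rfl fun k _ => ?_
      rw [Matrix.mul_diagonal, Matrix.transpose_apply, hW, Matrix.submatrix_apply, hV]
      simp only [Matrix.vandermonde_apply, id_eq, Fin.revPerm_apply]
      have hrev : ((Fin.rev k : Fin s) : ℕ) = n - (k : ℕ) := by
        have := k.isLt
        simp only [Fin.val_rev]
        omega
      rw [hrev]
      ring
    rw [lhs, Matrix.of_apply, add_pow,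
      ← Fin.sum_univ_eq_sum_range (fun k => e i ^ k * e j ^ (n - k) * (Nat.choose n k : F)) (n + 1),
      ← hsn]
  refine ⟨Matrix.of (fun i j : Fin s => (e i + e j) ^ n), ?_, ?_⟩
  · -- determinant nonzero
    rw [← hM, Matrix.det_mul, Matrix.det_mul]
    refine mul_ne_zero (mul_ne_zero ?_ ?_) ?_
    · rw [hV]
      exact Matrix.det_vandermonde_ne_zero_iff.mpr fun x y hxy => e.injective hxy
    · rw [hD, Matrix.det_diagonal]
      refine Finset.prod_ne_zero_iff.mpr fun k _ => hchoose (k : ℕ) ?_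
      have := k.isLt; omega
    · rw [Matrix.det_transpose, hW, Matrix.det_permute']
      apply mul_ne_zero
      · rcases Int.units_eq_one_or (Equiv.Perm.sign (Fin.revPerm : Equiv.Perm (Fin s))) with h | h <;>
          rw [h] <;> simp
      · rw [hV]
        exact Matrix.det_vandermonde_ne_zero_iff.mpr fun x y hxy => e.injective hxy
  · -- 2x2 minors
    intro i j k l hij hkl
    rw [Matrix.det_fin_two_of]
    have hs2 : 2 ≤ s := by
      have h1 : (i : ℕ) ≠ (j : ℕ) := fun h => hij (Fin.ext h)
      have := i.isLt; have := j.isLt; omega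
    have hn1 : 1 ≤ n := by omega
    have hcop : Nat.Coprime n (Fintype.card F - 1) := by
      have h1 : Fintype.card F - 1 = p * m - 1 := by rw [hF, hq]
      have h2 : n = (p - 1) * m - 1 := by rw [hn, hs_eq]
      rw [h1, h2]
      exact AONT_coprime hp2 hm1
    have heij : e i ≠ e j := fun h => hij (e.injective h)
    have hekl : e k ≠ e l := fun h => hkl (e.injective h)
    simp only [Matrix.of_apply]
    refine sub_ne_zero.mpr (AONT_2x2 n hn1 hcop ?_ ?_ ?_ ?_ ?_)
    · exact fun h => hekl (add_left_cancel h)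
    · exact fun h => heij (add_right_cancel h)
    · exact fun h => heij (add_right_cancel h)
    · exact fun h => hekl (add_left_cancel h)
    · intro h
      have h0 : (e i - e j) * (e k - e l)
          = (e i + e l) * (e j + e k) - (e i + e k) * (e j + e l) := by ring
      rw [← h, sub_self] at h0
      rcases mul_eq_zero.mp h0 with h' | h'
      · exact heij (sub_eq_zero.mp h')
      · exact hekl (sub_eq_zero.mp h')
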